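/- The number of orbits under simultaneous cyclic rotation and the symbol permutation swapping 0↔1 and fixing a (the group C_n^Π) acting on words of length n over the alphabet {0, a, 1} equals (1/(2n))·[Σ_{d|n, d odd} φ(d)·(1 + 3^{n/d}) + 2·Σ_{d|n, d even} φ(d)·3^{n/d}]. -/

import Mathlib

open Finset

namespace PermNecklace

def flipIt (k : ℕ) (x : Fin 3) : Fin 3 := if Even k then x else 2 - x

lemma two_sub_two_sub : ∀ x : Fin 3, 2 - (2 - x) = x := by decide

lemma flipIt_flipIt (k : ℕ) (x : Fin 3) : flipIt k (flipIt k x) = x := by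
  unfold flipIt; split <;> simp [two_sub_two_sub]

lemma flipIt_succ (k : ℕ) (x : Fin 3) : flipIt (k+1) x = 2 - flipIt k x := by
  unfold flipIt
  by_cases h : Even k
  · simp [h, Nat.even_add_one, two_sub_two_sub]
  · simp [h, Nat.even_add_one, two_sub_two_sub]

lemma flipIt_sub (k : ℕ) (x : Fin 3) : flipIt k (2 - x) = 2 - flipIt k x := by
  unfold flipIt; split <;> simp [two_sub_two_sub]

lemma flipIt_congr {a b : ℕ} (h : a % 2 = b % 2) (x : Fin 3) : flipIt a x = flipIt b x := by
  have hiff : Even a ↔ Even b := by rw [Nat.even_iff, Nat.even_iff, h]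
  unfold flipIt
  by_cases ha : Even a
  · rw [if_pos ha, if_pos (hiff.mp ha)]
  · rw [if_neg ha, if_neg (fun hb => ha (hiff.mpr hb))]

variable {n : ℕ} [NeZero n]

lemma card_fix_rot (l : ZMod n) :
    Nat.card {w : ZMod n → Fin 3 // ∀ i, w (i + l) = w i} = 3 ^ (n.gcd l.val) := by
  have npos : 0 < n := Nat.pos_of_ne_zero (NeZero.ne n)
  set g := n.gcd l.val with hgdef
  have hg : 0 < g := Nat.gcd_pos_of_pos_left _ npos
  have hgn : g ∣ n := Nat.gcd_dvd_left _ _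
  have hgl : g ∣ l.val := Nat.gcd_dvd_right _ _
  have hgle : g ≤ n := Nat.le_of_dvd npos hgn
  have hcast : ∀ c : ZMod n, ((c.val : ℕ) : ZMod n) = c := fun c => ZMod.natCast_rightInverse c
  -- Bezout
  have hb : ∃ b : ZMod n, (g : ZMod n) = l * b := by
    have h := Nat.gcd_eq_gcd_ab n l.val
    have h2 := congrArg (fun z : ℤ => (z : ZMod n)) h
    push_cast at h2
    rw [ZMod.natCast_self, hcast] at h2
    exact ⟨((n.gcdB l.val : ℤ) : ZMod n), by rw [← hgdef] at h2; simpa using h2⟩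
  have step : ∀ (w : ZMod n → Fin 3), (∀ i, w (i + l) = w i) →
      ∀ (k : ℕ) (x : ZMod n), w (x + (k : ZMod n) * l) = w x := by
    intro w hw k
    induction k with
    | zero => simp
    | succ k ih =>
      intro x
      have : ((k + 1 : ℕ) : ZMod n) * l = (k : ZMod n) * l + l := by push_cast; ring
      rw [this, ← add_assoc, hw, ih]
  have multZ : ∀ (w : ZMod n → Fin 3), (∀ i, w (i + l) = w i) →
      ∀ (c : ZMod n) (x : ZMod n), w (x + c * l) = w x := by
    intro w hw c x
    rw [← hcast c]
    exact step w hw c.val x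
  have residue : ∀ (w : ZMod n → Fin 3), (∀ i, w (i + l) = w i) →
      ∀ x : ZMod n, w x = w ((x.val % g : ℕ) : ZMod n) := by
    intro w hw x
    obtain ⟨b, hbB⟩ := hb
    have hx : x = ((x.val % g : ℕ) : ZMod n) + (((x.val / g : ℕ) : ZMod n) * b) * l := by
      have h1 : x.val % g + x.val / g * g = x.val := Nat.mod_add_div' x.val g
      calc x = ((x.val : ℕ) : ZMod n) := (hcast x).symm
        _ = ((x.val % g + x.val / g * g : ℕ) : ZMod n) := by rw [h1]
        _ = ((x.val % g : ℕ) : ZMod n) + ((x.val / g : ℕ) : ZMod n) * (g : ZMod n) := by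
            push_cast; ring
        _ = _ := by rw [hbB]; ring
    conv_lhs => rw [hx]
    exact multZ w hw _ _
  have e : {w : ZMod n → Fin 3 // ∀ i, w (i + l) = w i} ≃ (Fin g → Fin 3) :=
    { toFun := fun w k => w.1 ((k : ℕ) : ZMod n)
      invFun := fun v => ⟨fun i => v ⟨i.val % g, Nat.mod_lt _ hg⟩, by
        intro i
        refine congrArg v (Fin.ext ?_)
        show (i + l).val % g = i.val % g
        obtain ⟨c, hc'⟩ := hgl
        rw [ZMod.val_add, Nat.mod_mod_of_dvd _ hgn, hc', Nat.add_mul_mod_self_left]⟩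
      left_inv := fun w => Subtype.ext (funext fun i => (residue w.1 w.2 i).symm)
      right_inv := fun v => funext fun k => by
        refine congrArg v (Fin.ext ?_)
        show ((k : ℕ) : ZMod n).val % g = (k : ℕ)
        rw [ZMod.val_cast_of_lt (lt_of_lt_of_le k.isLt hgle), Nat.mod_eq_of_lt k.isLt] }
  rw [Nat.card_congr e]
  simp [Nat.card_eq_fintype_card]


lemma mul_ord_cast_zero (l : ZMod n) :
    ((n / n.gcd l.val : ℕ) : ZMod n) * l = 0 := by
  set g := n.gcd l.val with hgdef
  have hg : 0 < g := Nat.gcd_pos_of_pos_left _ (Nat.pos_of_ne_zero (NeZero.ne n))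
  have hgn : g ∣ n := Nat.gcd_dvd_left _ _
  have hcast : ((l.val : ℕ) : ZMod n) = l := ZMod.natCast_rightInverse l
  obtain ⟨c, hc⟩ : g ∣ l.val := Nat.gcd_dvd_right _ _
  have key : (n / g) * l.val = n * c := by
    rw [hc, ← mul_assoc, Nat.div_mul_cancel hgn]
  calc ((n / g : ℕ) : ZMod n) * l
      = (((n / g) * l.val : ℕ) : ZMod n) := by rw [Nat.cast_mul, hcast]
    _ = ((n * c : ℕ) : ZMod n) := by rw [key]
    _ = 0 := by push_cast [ZMod.natCast_self]; ring

lemma flip_iter (l : ZMod n) (w : ZMod n → Fin 3) (hw : ∀ i, 2 - w (i + l) = w i) :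
    ∀ (k : ℕ) (x : ZMod n), w (x + (k : ZMod n) * l) = flipIt k (w x) := by
  have hw' : ∀ i, w (i + l) = 2 - w i := by
    intro i
    rw [← hw i, two_sub_two_sub]
  intro k
  induction k with
  | zero => intro x; simp [flipIt]
  | succ k ih =>
    intro x
    have hstep : ((k + 1 : ℕ) : ZMod n) * l = (k : ZMod n) * l + l := by push_cast; ring
    rw [hstep, ← add_assoc, hw', ih, flipIt_succ]

lemma card_fix_flip_odd (l : ZMod n) (h : Odd (n / n.gcd l.val)) :
    Nat.card {w : ZMod n → Fin 3 // ∀ i, 2 - w (i + l) = w i} = 1 := by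
  rw [Nat.card_eq_one_iff_unique]
  have key : ∀ (w : ZMod n → Fin 3), (∀ i, 2 - w (i + l) = w i) → ∀ x, w x = 1 := by
    intro w hw x
    have h1 := flip_iter l w hw (n / n.gcd l.val) x
    rw [mul_ord_cast_zero l, add_zero] at h1
    rw [flipIt, if_neg (Nat.not_even_iff_odd.mpr h)] at h1
    have h2 : ∀ y : Fin 3, y = 2 - y → y = 1 := by decide
    exact h2 _ h1
  constructor
  · exact ⟨fun w₁ w₂ => Subtype.ext (funext fun x => by
      rw [key w₁.1 w₁.2 x, key w₂.1 w₂.2 x])⟩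
  · exact ⟨⟨fun _ => 1, fun i => rfl⟩⟩

lemma card_fix_flip_even (l : ZMod n) (h : Even (n / n.gcd l.val)) :
    Nat.card {w : ZMod n → Fin 3 // ∀ i, 2 - w (i + l) = w i} = 3 ^ (n.gcd l.val) := by
  have npos : 0 < n := Nat.pos_of_ne_zero (NeZero.ne n)
  set g := n.gcd l.val with hgdef
  set m := n / g with hmdef
  have hg : 0 < g := Nat.gcd_pos_of_pos_left _ npos
  have hgn : g ∣ n := Nat.gcd_dvd_left _ _
  have hgl : g ∣ l.val := Nat.gcd_dvd_right _ _
  have hn : n = g * m := by rw [hmdef, Nat.mul_div_cancel' hgn]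
  have hm2 : 2 ∣ m := h.two_dvd
  have hmpos : 0 < m := Nat.div_pos (Nat.le_of_dvd npos hgn) hg
  have hm1 : 1 < m := by omega
  -- l' is coprime to m
  set l' := l.val / g with hl'def
  have hco : Nat.Coprime m l' := by
    have := Nat.coprime_div_gcd_div_gcd (m := n) (n := l.val) hg
    exact this
  obtain ⟨u, hu⟩ : ∃ u, l' * u % m = 1 :=
    (Nat.exists_mul_mod_eq_one_of_coprime hco.symm hm1).imp fun _ h => h.2
  -- the parity function
  set p : ZMod n → ℕ := fun i => i.val / g * u with hpdef
  have hlval : l.val = g * l' := (Nat.mul_div_cancel' hgl).symm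
  -- key parity property
  have key : ∀ i : ZMod n, p (i + l) % 2 = (p i + 1) % 2 := by
    intro i
    have hr : i.val % g < g := Nat.mod_lt _ hg
    set r := i.val % g with hrdef
    set j := i.val / g with hjdef
    have hi : i.val = r + j * g := by rw [hrdef, hjdef, Nat.mod_add_div']
    set t := j + l' with htdef
    have hsum : i.val + l.val = r + t * g := by rw [hi, hlval, htdef]; ring
    have hmod : (i + l).val = r + t % m * g := by
      rw [ZMod.val_add, hsum, hn]
      have hdecomp : r + t * g = r + t % m * g + t / m * (g * m) := by
        conv_lhs => rw [← Nat.mod_add_div t m]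
        ring
      rw [hdecomp, Nat.add_mul_mod_self_right]
      apply Nat.mod_eq_of_lt
      calc r + t % m * g < g + t % m * g := by omega
        _ = (t % m + 1) * g := by ring
        _ ≤ m * g := Nat.mul_le_mul_right _ (Nat.succ_le_of_lt (Nat.mod_lt _ hmpos))
        _ = g * m := by ring
    have hdiv : (i + l).val / g = t % m := by
      rw [hmod, Nat.add_mul_div_right _ _ hg, Nat.div_eq_of_lt hr, zero_add]
    -- now mod-2 computation
    show (i + l).val / g * u % 2 = (j * u + 1) % 2
    rw [hdiv]
    have e1 : t % m * u ≡ t * u [MOD 2] :=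
      Nat.ModEq.mul_right u ((Nat.mod_modEq t m).of_dvd hm2)
    have e2 : l' * u ≡ 1 [MOD 2] := by
      have : l' * u ≡ 1 [MOD m] := by
        rw [Nat.ModEq, hu, Nat.mod_eq_of_lt hm1]
      exact this.of_dvd hm2
    calc t % m * u % 2 = t * u % 2 := e1
      _ = (j * u + l' * u) % 2 := by rw [htdef]; ring_nf
      _ = (j * u + 1) % 2 := (Nat.ModEq.add_left (j * u) e2)
  -- the self-inverse flipping bijection
  have hflip : ∀ (w : ZMod n → Fin 3), (∀ i, w (i + l) = w i) →
      ∀ i, 2 - flipIt (p (i + l)) (w (i + l)) = flipIt (p i) (w i) := by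
    intro w hw i
    rw [hw i, flipIt_congr (key i), flipIt_succ, two_sub_two_sub]
  have hflip' : ∀ (w : ZMod n → Fin 3), (∀ i, 2 - w (i + l) = w i) →
      ∀ i, flipIt (p (i + l)) (w (i + l)) = flipIt (p i) (w i) := by
    intro w hw i
    rw [flipIt_congr (key i), flipIt_succ, ← hw i, flipIt_sub]
  have e : {w : ZMod n → Fin 3 // ∀ i, w (i + l) = w i} ≃
      {w : ZMod n → Fin 3 // ∀ i, 2 - w (i + l) = w i} :=
    { toFun := fun w => ⟨fun i => flipIt (p i) (w.1 i), fun i => hflip w.1 w.2 i⟩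
      invFun := fun w => ⟨fun i => flipIt (p i) (w.1 i), fun i => hflip' w.1 w.2 i⟩
      left_inv := fun w => Subtype.ext (funext fun i => flipIt_flipIt _ _)
      right_inv := fun w => Subtype.ext (funext fun i => flipIt_flipIt _ _) }
  rw [← Nat.card_congr e, card_fix_rot]


def act (a : ZMod n × ZMod 2) (w : ZMod n → Fin 3) : ZMod n → Fin 3 :=
  fun i => if a.2 = 0 then w (i + a.1) else 2 - w (i + a.1)

lemma zmod2_cases : ∀ ε : ZMod 2, ε = 0 ∨ ε = 1 := by decide

lemma act_add (a b : ZMod n × ZMod 2) (w : ZMod n → Fin 3) :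
    act (a + b) w = act a (act b w) := by
  funext i
  unfold act
  have h1 : (a + b).1 = a.1 + b.1 := rfl
  have h2 : (a + b).2 = a.2 + b.2 := rfl
  rcases zmod2_cases a.2 with ha | ha <;> rcases zmod2_cases b.2 with hb | hb <;>
    simp [h1, h2, ha, hb, add_assoc, two_sub_two_sub, show (1 + 1 : ZMod 2) = 0 from rfl,
      show (0 + 1 : ZMod 2) = 1 from rfl, show (1 + 0 : ZMod 2) = 1 from rfl,
      show (1 : ZMod 2) ≠ 0 from by decide]

instance necklaceAction : MulAction (Multiplicative (ZMod n × ZMod 2)) (ZMod n → Fin 3) where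
  smul g w := act (Multiplicative.toAdd g) w
  one_smul w := by
    show act 0 w = w
    funext i
    simp [act]
  mul_smul g h w := act_add (Multiplicative.toAdd g) (Multiplicative.toAdd h) w

lemma zmod2_sum (h : ZMod 2 → ℕ) : ∑ ε : ZMod 2, h ε = h 0 + h 1 := Fin.sum_univ_two h

lemma sum_over_zmod (F : ℕ → ℕ) :
    ∑ l : ZMod n, F (n / n.gcd l.val) = ∑ d ∈ n.divisors, d.totient * F d := by
  have hcard : Fintype.card (ZMod n) = n := ZMod.card n
  have key : ∀ l : ZMod n, n / n.gcd l.val = addOrderOf l := by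
    intro l
    have h := ZMod.addOrderOf_coe l.val (NeZero.ne n)
    rw [ZMod.natCast_rightInverse l] at h
    exact h.symm
  calc ∑ l : ZMod n, F (n / n.gcd l.val) = ∑ l : ZMod n, F (addOrderOf l) :=
        Finset.sum_congr rfl fun l _ => by rw [key l]
    _ = ∑ d ∈ n.divisors, ∑ l ∈ univ.filter (fun l : ZMod n => addOrderOf l = d),
          F (addOrderOf l) := by
        rw [Finset.sum_fiberwise_of_maps_to]
        intro l _
        rw [Nat.mem_divisors]
        constructor
        · have h := addOrderOf_dvd_card (x := l)
          rwa [hcard] at h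
        · exact NeZero.ne n
    _ = ∑ d ∈ n.divisors, d.totient * F d := by
        refine Finset.sum_congr rfl fun d hd => ?_
        rw [Finset.sum_congr rfl (fun l hl => by rw [(Finset.mem_filter.mp hl).2]),
            Finset.sum_const, smul_eq_mul]
        congr 1
        exact IsAddCyclic.card_addOrderOf_eq_totient
          (by rw [hcard]; exact (Nat.mem_divisors.mp hd).1)

theorem master (n : ℕ) [NeZero n] :
    2 * n * Nat.card (Quot (fun w₁ w₂ : ZMod n → Fin 3 =>
        ∃ l : ZMod n, w₁ = (fun i => w₂ (i + l)) ∨ w₁ = fun i => 2 - w₂ (i + l)))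
      = ∑ d ∈ n.divisors.filter (fun d => Odd d), Nat.totient d * (1 + 3 ^ (n / d)) +
        2 * ∑ d ∈ n.divisors.filter (fun d => Even d), Nat.totient d * 3 ^ (n / d) := by
  classical
  letI : Fintype (Quotient (MulAction.orbitRel (Multiplicative (ZMod n × ZMod 2))
      (ZMod n → Fin 3))) := Fintype.ofFinite _
  letI : ∀ g : Multiplicative (ZMod n × ZMod 2),
      Fintype (MulAction.fixedBy (ZMod n → Fin 3) g) := fun g => Fintype.ofFinite _
  have hb := MulAction.sum_card_fixedBy_eq_card_orbits_mul_card_group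
    (Multiplicative (ZMod n × ZMod 2)) (ZMod n → Fin 3)
  -- identify the quotient
  have hrel : ∀ w₁ w₂ : ZMod n → Fin 3,
      (∃ l : ZMod n, w₁ = (fun i => w₂ (i + l)) ∨ w₁ = fun i => 2 - w₂ (i + l)) ↔
      (MulAction.orbitRel (Multiplicative (ZMod n × ZMod 2)) (ZMod n → Fin 3)) w₁ w₂ := by
    intro w₁ w₂
    rw [MulAction.orbitRel_apply, MulAction.mem_orbit_iff]
    constructor
    · rintro ⟨l, h | h⟩
      · refine ⟨Multiplicative.ofAdd (l, 0), ?_⟩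
        rw [h]
        show act (l, 0) w₂ = _
        funext i
        simp [act]
      · refine ⟨Multiplicative.ofAdd (l, 1), ?_⟩
        rw [h]
        show act (l, 1) w₂ = _
        funext i
        simp [act, show ¬(1 : ZMod 2) = 0 from by decide]
    · rintro ⟨g, rfl⟩
      refine ⟨(Multiplicative.toAdd g).1, ?_⟩
      rcases zmod2_cases (Multiplicative.toAdd g).2 with h1 | h1
      · left
        show act (Multiplicative.toAdd g) w₂ = _
        funext i
        simp [act, h1]
      · right
        show act (Multiplicative.toAdd g) w₂ = _
        funext i
        simp [act, h1, show ¬(1 : ZMod 2) = 0 from by decide]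
  have hq : Nat.card (Quot (fun w₁ w₂ : ZMod n → Fin 3 =>
      ∃ l : ZMod n, w₁ = (fun i => w₂ (i + l)) ∨ w₁ = fun i => 2 - w₂ (i + l)))
      = Fintype.card (Quotient (MulAction.orbitRel (Multiplicative (ZMod n × ZMod 2))
        (ZMod n → Fin 3))) := by
    rw [← Nat.card_eq_fintype_card]
    exact Nat.card_congr (Quot.congrRight hrel)
  -- compute the sum of fixed points
  have heval0 : ∀ l : ZMod n,
      Fintype.card (MulAction.fixedBy (ZMod n → Fin 3) (Multiplicative.ofAdd (l, (0 : ZMod 2))))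
      = 3 ^ (n.gcd l.val) := by
    intro l
    rw [← Nat.card_eq_fintype_card]
    have e1 : MulAction.fixedBy (ZMod n → Fin 3) (Multiplicative.ofAdd (l, (0 : ZMod 2)))
        ≃ {w : ZMod n → Fin 3 // ∀ i, w (i + l) = w i} := by
      refine Equiv.subtypeEquivRight fun w => ?_
      show act (l, (0 : ZMod 2)) w = w ↔ _
      simp [act, funext_iff]
    rw [Nat.card_congr e1, card_fix_rot]
  have heval1 : ∀ l : ZMod n,
      Fintype.card (MulAction.fixedBy (ZMod n → Fin 3) (Multiplicative.ofAdd (l, (1 : ZMod 2))))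
      = (if Even (n / n.gcd l.val) then 3 ^ (n.gcd l.val) else 1) := by
    intro l
    rw [← Nat.card_eq_fintype_card]
    have e1 : MulAction.fixedBy (ZMod n → Fin 3) (Multiplicative.ofAdd (l, (1 : ZMod 2)))
        ≃ {w : ZMod n → Fin 3 // ∀ i, 2 - w (i + l) = w i} := by
      refine Equiv.subtypeEquivRight fun w => ?_
      show act (l, (1 : ZMod 2)) w = w ↔ _
      simp [act, funext_iff, show ¬(1 : ZMod 2) = 0 from by decide]
    rw [Nat.card_congr e1]
    by_cases he : Even (n / n.gcd l.val)
    · rw [if_pos he, card_fix_flip_even l he]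
    · rw [if_neg he, card_fix_flip_odd l (Nat.not_even_iff_odd.mp he)]
  have hsum : ∑ g : Multiplicative (ZMod n × ZMod 2),
      Fintype.card (MulAction.fixedBy (ZMod n → Fin 3) g)
      = ∑ l : ZMod n, 3 ^ (n.gcd l.val)
        + ∑ l : ZMod n, (if Even (n / n.gcd l.val) then 3 ^ (n.gcd l.val) else 1) := by
    rw [← Equiv.sum_comp (Multiplicative.ofAdd)
      (fun g => Fintype.card (MulAction.fixedBy (ZMod n → Fin 3) g))]
    rw [Fintype.sum_prod_type]
    rw [← Finset.sum_add_distrib]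
    refine Finset.sum_congr rfl fun l _ => ?_
    rw [zmod2_sum (fun ε : ZMod 2 =>
      Fintype.card (MulAction.fixedBy (ZMod n → Fin 3) (Multiplicative.ofAdd (l, ε))))]
    rw [heval0 l, heval1 l]
  -- divisor-sum forms
  have hdd : ∀ l : ZMod n, n / (n / n.gcd l.val) = n.gcd l.val := fun l =>
    Nat.div_div_self (Nat.gcd_dvd_left _ _) (NeZero.ne n)
  have hA : ∑ l : ZMod n, 3 ^ (n.gcd l.val)
      = ∑ d ∈ n.divisors, d.totient * 3 ^ (n / d) := by
    refine Eq.trans ?_ (sum_over_zmod (fun d => 3 ^ (n / d)))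
    refine Finset.sum_congr rfl fun l _ => ?_
    show _ = 3 ^ (n / (n / n.gcd l.val))
    rw [hdd l]
  have hB : ∑ l : ZMod n, (if Even (n / n.gcd l.val) then 3 ^ (n.gcd l.val) else 1)
      = ∑ d ∈ n.divisors, d.totient * (if Even d then 3 ^ (n / d) else 1) := by
    refine Eq.trans ?_ (sum_over_zmod (fun d => if Even d then 3 ^ (n / d) else 1))
    refine Finset.sum_congr rfl fun l _ => ?_
    show _ = (if Even (n / n.gcd l.val) then 3 ^ (n / (n / n.gcd l.val)) else 1)
    rw [hdd l]
  have hcardG : Fintype.card (Multiplicative (ZMod n × ZMod 2)) = n * 2 := by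
    simp [ZMod.card]
  calc 2 * n * Nat.card (Quot (fun w₁ w₂ : ZMod n → Fin 3 =>
        ∃ l : ZMod n, w₁ = (fun i => w₂ (i + l)) ∨ w₁ = fun i => 2 - w₂ (i + l)))
      = Fintype.card (Quotient (MulAction.orbitRel (Multiplicative (ZMod n × ZMod 2))
          (ZMod n → Fin 3))) * (n * 2) := by rw [hq]; ring
    _ = ∑ g : Multiplicative (ZMod n × ZMod 2),
          Fintype.card (MulAction.fixedBy (ZMod n → Fin 3) g) := by
        rw [← hcardG, ← hb]
    _ = ∑ d ∈ n.divisors, d.totient * 3 ^ (n / d)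
        + ∑ d ∈ n.divisors, d.totient * (if Even d then 3 ^ (n / d) else 1) := by
        rw [hsum, hA, hB]
    _ = _ := by
        rw [← Finset.sum_filter_add_sum_filter_not n.divisors (fun d => Even d)
            (fun d => d.totient * 3 ^ (n / d)),
          ← Finset.sum_filter_add_sum_filter_not n.divisors (fun d => Even d)
            (fun d => d.totient * (if Even d then 3 ^ (n / d) else 1))]
        have h1 : ∑ d ∈ n.divisors.filter (fun d => Even d),
            d.totient * (if Even d then 3 ^ (n / d) else 1)
            = ∑ d ∈ n.divisors.filter (fun d => Even d), d.totient * 3 ^ (n / d) :=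
          Finset.sum_congr rfl fun d hd => by rw [if_pos (Finset.mem_filter.mp hd).2]
        have h2 : ∑ d ∈ n.divisors.filter (fun d => ¬ Even d),
            d.totient * (if Even d then 3 ^ (n / d) else 1)
            = ∑ d ∈ n.divisors.filter (fun d => ¬ Even d), d.totient :=
          Finset.sum_congr rfl fun d hd => by
            rw [if_neg (Finset.mem_filter.mp hd).2, mul_one]
        have h3 : n.divisors.filter (fun d => Odd d)
            = n.divisors.filter (fun d => ¬ Even d) :=
          Finset.filter_congr fun d _ => by rw [← Nat.not_even_iff_odd]
        have h4 : ∑ d ∈ n.divisors.filter (fun d => ¬ Even d), d.totient * (1 + 3 ^ (n / d))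
            = ∑ d ∈ n.divisors.filter (fun d => ¬ Even d), d.totient
              + ∑ d ∈ n.divisors.filter (fun d => ¬ Even d), d.totient * 3 ^ (n / d) := by
          rw [← Finset.sum_add_distrib]
          exact Finset.sum_congr rfl fun d _ => by ring
        rw [h1, h2, h3, h4]
        ring

end PermNecklace

theorem permuted_necklace_count_ternary (n : ℕ) (hn : 0 < n) :
    2 * n * Nat.card (Quot (fun w₁ w₂ : Fin n → Fin 3 =>
        ∃ l : Fin n, w₁ = (fun i => w₂ (i + l)) ∨ w₁ = fun i => 2 - w₂ (i + l)))
      = ∑ d ∈ n.divisors.filter (fun d => Odd d), Nat.totient d * (1 + 3 ^ (n / d)) +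
        2 * ∑ d ∈ n.divisors.filter (fun d => Even d), Nat.totient d * 3 ^ (n / d) := by
  obtain ⟨m, rfl⟩ := Nat.exists_eq_succ_of_ne_zero hn.ne'
  exact PermNecklace.master (m + 1)
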